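/- Let X and Y be real normed vector spaces with X infinite-dimensional, let T : X → Y be a bounded linear operator, and let E be a dense linear subspace of X. Then Γ(T|_E) ≤ Γ(T). -/

import Mathlib

set_option synthInstance.maxHeartbeats 1000000
set_option maxHeartbeats 1000000

/-- The operator norm of the restriction of `T` to a subspace `M`. -/
noncomputable def restrictedNorm {X Y : Type*} [NormedAddCommGroup X] [NormedSpace ℝ X]
    [NormedAddCommGroup Y] [NormedSpace ℝ Y] (T : X →L[ℝ] Y) (M : Submodule ℝ X) : ℝ :=
  ‖T.comp M.subtypeL‖

/-- `Γ(T) = inf_{M ∈ I(X)} ‖T|_M‖`, the infimum of the norms of the restrictions of `T`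
to infinite-dimensional subspaces of the domain. -/
noncomputable def opGamma {X Y : Type*} [NormedAddCommGroup X] [NormedSpace ℝ X]
    [NormedAddCommGroup Y] [NormedSpace ℝ Y] (T : X →L[ℝ] Y) : ℝ :=
  sInf {r : ℝ | ∃ M : Submodule ℝ X, ¬ FiniteDimensional ℝ M ∧ r = restrictedNorm T M}

open Submodule Set

section Construction

variable {X : Type*} [NormedAddCommGroup X] [NormedSpace ℝ X]

variable {X : Type*} [NormedAddCommGroup X] [NormedSpace ℝ X]

lemma exists_functional_eq_one_of_nmem (F : Submodule ℝ X) (hF : IsClosed (F : Set X))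
    {x : X} (hx : x ∉ F) :
    ∃ g : X →L[ℝ] ℝ, g x = 1 ∧ ∀ z ∈ F, g z = 0 := by
  obtain ⟨g₀, u, hgu, hux⟩ := geometric_hahn_banach_closed_point (F.convex) hF hx
  have hg0 : ∀ z ∈ F, g₀ z = 0 := by
    intro z hz
    by_contra h0
    have hall : ∀ t : ℝ, t * g₀ z < u := by
      intro t
      have := hgu (t • z) (F.smul_mem t hz)
      simpa using this
    rcases lt_or_gt_of_ne h0 with h | h
    · have := hall ((u + 1) / g₀ z)
      rw [div_mul_cancel₀ _ (ne_of_lt h)] at this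
      linarith
    · have := hall ((u + 1) / g₀ z)
      rw [div_mul_cancel₀ _ (ne_of_gt h)] at this
      linarith
  have hu : 0 < u := by simpa using hgu 0 F.zero_mem
  have hx0 : 0 < g₀ x := lt_trans hu hux
  refine ⟨(g₀ x)⁻¹ • g₀, ?_, ?_⟩
  · simp [inv_mul_cancel₀ (ne_of_gt hx0)]
  · intro z hz; simp [hg0 z hz]

/-- The invariant for the recursive construction: the first `k` terms are built. -/
def GInv (E M : Submodule ℝ X) (ε₂ : ℝ) (k : ℕ)
    (d : (ℕ → X) × (ℕ → X) × (ℕ → (X →L[ℝ] ℝ))) : Prop :=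
  ∀ j < k, d.1 j ∈ E ∧ d.2.1 j ∈ M ∧
    (∀ l < k, l ≠ j → d.2.2 l (d.1 j) = 0) ∧
    (1/2 : ℝ) ≤ d.2.2 j (d.1 j) ∧
    (‖d.2.2 j‖ + 1) * ‖d.1 j - d.2.1 j‖ ≤ ε₂ * (1/2)^(j+2)

lemma gstep (E M : Submodule ℝ X) (hE : Dense (E : Set X)) (hM : ¬ FiniteDimensional ℝ M)
    {ε₂ : ℝ} (hε₂ : 0 < ε₂) (k : ℕ) (d : (ℕ → X) × (ℕ → X) × (ℕ → (X →L[ℝ] ℝ)))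
    (h : GInv E M ε₂ k d) :
    ∃ d', GInv E M ε₂ (k+1) d' ∧
      ∀ j < k, d'.1 j = d.1 j ∧ d'.2.1 j = d.2.1 j ∧ d'.2.2 j = d.2.2 j := by
  obtain ⟨e, m, f⟩ := d
  simp only at h ⊢
  -- Step 1: find a nonzero element of M annihilated by the first k functionals
  have hm' : ∃ m' : X, m' ∈ M ∧ m' ≠ 0 ∧ ∀ l < k, f l m' = 0 := by
    by_contra hc
    push_neg at hc
    let φ : M →ₗ[ℝ] (Fin k → ℝ) :=
      LinearMap.pi (fun i => ((f i).toLinearMap).comp M.subtype)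
    have hker : Function.Injective φ := by
      rw [← LinearMap.ker_eq_bot, LinearMap.ker_eq_bot']
      intro z hz
      by_contra hz0
      obtain ⟨l, hl, hfl⟩ := hc z z.2 (by simpa using hz0)
      have := congr_fun hz ⟨l, hl⟩
      simp only [φ, LinearMap.pi_apply, LinearMap.comp_apply,
        ContinuousLinearMap.coe_coe, Submodule.coe_subtype, Pi.zero_apply] at this
      exact hfl this
    exact hM (FiniteDimensional.of_injective φ hker)
  obtain ⟨m', hm'M, hm'0, hm'f⟩ := hm'
  -- the span of the previously constructed vectors
  set F : Submodule ℝ X := span ℝ (Set.range fun i : Fin k => e i) with hFdef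
  have hFfd : FiniteDimensional ℝ F := FiniteDimensional.span_of_finite ℝ (Set.finite_range _)
  have hFclosed : IsClosed (F : Set X) := F.closed_of_finiteDimensional
  have heF : ∀ l < k, e l ∈ F := by
    intro l hl
    exact subset_span ⟨⟨l, hl⟩, rfl⟩
  have hfe_pos : ∀ l (hl : l < k), (0:ℝ) < f l (e l) := fun l hl =>
    lt_of_lt_of_le (by norm_num) (h l hl).2.2.2.1
  -- Step 2: m' is not in F
  have hm'F : m' ∉ F := by
    intro hmem
    rw [mem_span_range_iff_exists_fun] at hmem
    obtain ⟨cc, hcc⟩ := hmem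
    have hcc0 : ∀ l : Fin k, cc l = 0 := by
      intro l
      have h1 := hm'f l l.2
      rw [← hcc, map_sum] at h1
      have h2 : ∑ i : Fin k, f l (cc i • e i) = cc l * f l (e l) := by
        rw [Finset.sum_eq_single l]
        · simp [mul_comm]
        · intro i _ hi
          have : f (l:ℕ) (e (i:ℕ)) = 0 :=
            (h i i.2).2.2.1 l l.2 (fun hli => hi (Fin.ext hli).symm)
          simp [this]
        · intro hl; exact absurd (Finset.mem_univ l) hl
      rw [h2] at h1
      exact (mul_eq_zero.mp h1).resolve_right (ne_of_gt (hfe_pos l l.2))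
    apply hm'0
    rw [← hcc]
    simp [hcc0]
  -- Step 3: separating functional
  obtain ⟨g, hgm', hgF⟩ := exists_functional_eq_one_of_nmem F hFclosed hm'F
  -- Step 4: constants and approximation
  set B : ℝ := 1 + ∑ l ∈ Finset.range k, 2 * ‖f l‖ * ‖e l‖ with hBdef
  have hB1 : (1:ℝ) ≤ B := by
    have : (0:ℝ) ≤ ∑ l ∈ Finset.range k, 2 * ‖f l‖ * ‖e l‖ :=
      Finset.sum_nonneg fun l _ => by positivity
    simp only [hBdef]; linarith
  have hB0 : (0:ℝ) < B := lt_of_lt_of_le one_pos hB1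
  set δ : ℝ := min ((2*(‖g‖+1))⁻¹) (ε₂ * (1/2)^(k+2) / ((‖g‖+1) * B)) with hδdef
  have hδ0 : 0 < δ := by
    apply lt_min
    · positivity
    · apply div_pos (by positivity) (by positivity)
  obtain ⟨e', he'E, he'near⟩ : ∃ e' ∈ (E : Set X), ‖e' - m'‖ < δ := by
    have := Metric.mem_closure_iff.mp (hE m') δ hδ0
    obtain ⟨b, hb, hdist⟩ := this
    exact ⟨b, hb, by rwa [← dist_eq_norm, dist_comm]⟩
  have he'near' : ‖e' - m'‖ ≤ δ := le_of_lt he'near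
  -- Step 5: the corrected vector
  set eK : X := e' - ∑ l ∈ Finset.range k, ((f l e') / (f l (e l))) • e l with heKdef
  -- facts
  have hfl_e' : ∀ l < k, f l e' = f l (e' - m') := by
    intro l hl
    rw [map_sub, hm'f l hl, sub_zero]
  have hfl_bound : ∀ l < k, |f l e'| ≤ ‖f l‖ * δ := by
    intro l hl
    rw [hfl_e' l hl]
    calc |f l (e' - m')| ≤ ‖f l‖ * ‖e' - m'‖ := (f l).le_opNorm _
    _ ≤ ‖f l‖ * δ := by
        exact mul_le_mul_of_nonneg_left he'near' (norm_nonneg _)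
  have fact1 : ∀ l < k, f l eK = 0 := by
    intro l hl
    simp only [heKdef, map_sub, map_sum, map_smul]
    rw [Finset.sum_eq_single l]
    · simp only [smul_eq_mul]
      rw [div_mul_cancel₀ _ (ne_of_gt (hfe_pos l hl))]
      ring
    · intro i hi hil
      have : f l (e i) = 0 :=
        (h i (Finset.mem_range.mp hi)).2.2.1 l hl (Ne.symm hil)
      simp [this]
    · intro hl'; exact absurd (Finset.mem_range.mpr hl) hl'
  have fact2 : g eK = g e' := by
    simp only [heKdef, map_sub, map_sum, map_smul]
    have : ∀ i ∈ Finset.range k, (f i e' / f i (e i)) • g (e i) = 0 := by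
      intro i hi
      rw [hgF (e i) (heF i (Finset.mem_range.mp hi))]
      simp
    rw [Finset.sum_congr rfl this]
    simp
  have hge' : |g (e' - m')| ≤ (1:ℝ)/2 := by
    have h1 : |g (e' - m')| ≤ ‖g‖ * δ :=
      le_trans ((g).le_opNorm _) (mul_le_mul_of_nonneg_left he'near' (norm_nonneg _))
    have h2 : ‖g‖ * δ ≤ 1/2 := by
      have hδle : δ ≤ (2*(‖g‖+1))⁻¹ := min_le_left _ _
      have : ‖g‖ * δ ≤ ‖g‖ * (2*(‖g‖+1))⁻¹ :=
        mul_le_mul_of_nonneg_left hδle (norm_nonneg _)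
      apply le_trans this
      rw [mul_inv_le_iff₀ (by positivity)]
      nlinarith [norm_nonneg g]
    linarith
  have fact3 : (1/2 : ℝ) ≤ g eK := by
    rw [fact2]
    have : g e' = 1 + g (e' - m') := by
      rw [map_sub, hgm']; ring
    rw [this]
    have := abs_le.mp hge'
    linarith
  have fact4 : ‖eK - m'‖ ≤ δ * B := by
    have hsplit : eK - m' = (e' - m') - ∑ l ∈ Finset.range k, ((f l e') / (f l (e l))) • e l := by
      simp only [heKdef]; abel
    rw [hsplit]
    calc ‖(e' - m') - ∑ l ∈ Finset.range k, ((f l e') / (f l (e l))) • e l‖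
        ≤ ‖e' - m'‖ + ‖∑ l ∈ Finset.range k, ((f l e') / (f l (e l))) • e l‖ :=
          norm_sub_le _ _
      _ ≤ δ + ∑ l ∈ Finset.range k, (2 * ‖f l‖ * ‖e l‖) * δ := by
          apply add_le_add he'near'
          apply le_trans (norm_sum_le _ _)
          apply Finset.sum_le_sum
          intro l hl
          have hlk := Finset.mem_range.mp hl
          rw [norm_smul]
          have hcoef : ‖(f l e') / (f l (e l))‖ ≤ 2 * (‖f l‖ * δ) := by
            rw [Real.norm_eq_abs, abs_div, abs_of_pos (hfe_pos l hlk)]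
            rw [div_le_iff₀ (hfe_pos l hlk)]
            have h12 : (1/2 : ℝ) ≤ f l (e l) := (h l hlk).2.2.2.1
            nlinarith [hfl_bound l hlk, abs_nonneg (f l e'), norm_nonneg (f l),
              le_of_lt hδ0]
          calc ‖(f l e') / (f l (e l))‖ * ‖e l‖ ≤ (2 * (‖f l‖ * δ)) * ‖e l‖ :=
                mul_le_mul_of_nonneg_right hcoef (norm_nonneg _)
            _ = (2 * ‖f l‖ * ‖e l‖) * δ := by ring
      _ = δ * B := by
          rw [← Finset.sum_mul, hBdef]; ring
  have fact5 : (‖g‖ + 1) * ‖eK - m'‖ ≤ ε₂ * (1/2)^(k+2) := by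
    have hδle : δ ≤ ε₂ * (1/2)^(k+2) / ((‖g‖+1) * B) := min_le_right _ _
    calc (‖g‖ + 1) * ‖eK - m'‖ ≤ (‖g‖ + 1) * (δ * B) :=
          mul_le_mul_of_nonneg_left fact4 (by positivity)
      _ ≤ (‖g‖ + 1) * ((ε₂ * (1/2)^(k+2) / ((‖g‖+1) * B)) * B) := by
          apply mul_le_mul_of_nonneg_left _ (by positivity)
          exact mul_le_mul_of_nonneg_right hδle (le_of_lt hB0)
      _ = ε₂ * (1/2)^(k+2) := by
          field_simp
  have fact6 : eK ∈ E := by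
    apply E.sub_mem he'E
    apply Submodule.sum_mem
    intro l hl
    exact E.smul_mem _ (h l (Finset.mem_range.mp hl)).1
  -- assemble
  refine ⟨(Function.update e k eK, Function.update m k m', Function.update f k g), ?_, ?_⟩
  · intro j hj
    rcases Nat.lt_succ_iff_lt_or_eq.mp hj with hjk | hjk
    · have hne : j ≠ k := Nat.ne_of_lt hjk
      simp only [Function.update_of_ne hne]
      obtain ⟨h1, h2, h3, h4, h5⟩ := h j hjk
      refine ⟨h1, h2, ?_, ?_, ?_⟩
      · intro l hl hlj
        rcases Nat.lt_succ_iff_lt_or_eq.mp hl with hlk | hlk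
        · rw [Function.update_of_ne (Nat.ne_of_lt hlk)]
          exact h3 l hlk hlj
        · subst hlk
          rw [Function.update_self]
          exact hgF _ (heF j hjk)
      · exact h4
      · exact h5
    · subst hjk
      simp only [Function.update_self]
      refine ⟨fact6, hm'M, ?_, fact3, fact5⟩
      intro l hl hlj
      have hlk : l < j := lt_of_le_of_ne (Nat.lt_succ_iff.mp hl) hlj
      rw [Function.update_of_ne (Nat.ne_of_lt hlk)]
      exact fact1 l hlk
  · intro j hj
    exact ⟨Function.update_of_ne (Nat.ne_of_lt hj) _ _,
      Function.update_of_ne (Nat.ne_of_lt hj) _ _,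
      Function.update_of_ne (Nat.ne_of_lt hj) _ _⟩

lemma gchain (E M : Submodule ℝ X) (hE : Dense (E : Set X)) (hM : ¬ FiniteDimensional ℝ M)
    {ε₂ : ℝ} (hε₂ : 0 < ε₂) :
    ∃ d : (ℕ → X) × (ℕ → X) × (ℕ → (X →L[ℝ] ℝ)), ∀ k, GInv E M ε₂ k d := by
  classical
  set D := (ℕ → X) × (ℕ → X) × (ℕ → (X →L[ℝ] ℝ)) with hD
  let Step : ℕ → D → D := fun k d =>
    if h : GInv E M ε₂ k d then (gstep E M hE hM hε₂ k d h).choose else d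
  have hStep : ∀ k (d : D) (h : GInv E M ε₂ k d), GInv E M ε₂ (k+1) (Step k d) ∧
      ∀ j < k, (Step k d).1 j = d.1 j ∧ (Step k d).2.1 j = d.2.1 j ∧
        (Step k d).2.2 j = d.2.2 j := by
    intro k d h
    simp only [Step, dif_pos h]
    exact (gstep E M hE hM hε₂ k d h).choose_spec
  let seq : ℕ → D := fun k =>
    Nat.rec ((fun _ => 0), (fun _ => 0), (fun _ => 0)) (fun n ih => Step n ih) k
  have hseqsucc : ∀ n, seq (n+1) = Step n (seq n) := fun n => rfl
  have hseq0 : ∀ k, GInv E M ε₂ k (seq k) := by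
    intro k
    induction k with
    | zero => intro j hj; omega
    | succ n ih => rw [hseqsucc]; exact (hStep n (seq n) ih).1
  have hagree : ∀ K k, k ≤ K → ∀ j < k,
      (seq K).1 j = (seq k).1 j ∧ (seq K).2.1 j = (seq k).2.1 j ∧
      (seq K).2.2 j = (seq k).2.2 j := by
    intro K
    induction K with
    | zero =>
      intro k hk j hj
      have : k = 0 := Nat.le_zero.mp hk
      subst this; exact ⟨rfl, rfl, rfl⟩
    | succ n ih =>
      intro k hk j hj
      rcases Nat.lt_succ_iff_lt_or_eq.mp (Nat.lt_succ_of_le hk) with hkn | hkn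
      · have hk' : k ≤ n := Nat.lt_succ_iff.mp hkn
        have h1 := (hStep n (seq n) (hseq0 n)).2 j (lt_of_lt_of_le hj hk')
        have h2 := ih k hk' j hj
        rw [hseqsucc]
        exact ⟨h1.1.trans h2.1, h1.2.1.trans h2.2.1, h1.2.2.trans h2.2.2⟩
      · subst hkn; exact ⟨rfl, rfl, rfl⟩
  refine ⟨(fun n => (seq (n+1)).1 n, fun n => (seq (n+1)).2.1 n, fun n => (seq (n+1)).2.2 n), ?_⟩
  intro k j hj
  have hjk : j + 1 ≤ k := hj
  obtain ⟨h1, h2, h3, h4, h5⟩ := hseq0 k j hj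
  have hej : (seq k).1 j = (seq (j+1)).1 j := (hagree k (j+1) hjk j (Nat.lt_succ_self j)).1
  have hmj : (seq k).2.1 j = (seq (j+1)).2.1 j := (hagree k (j+1) hjk j (Nat.lt_succ_self j)).2.1
  have hfj : (seq k).2.2 j = (seq (j+1)).2.2 j := (hagree k (j+1) hjk j (Nat.lt_succ_self j)).2.2
  refine ⟨by rw [← hej]; exact h1, by rw [← hmj]; exact h2, ?_, ?_, ?_⟩
  · intro l hl hlj
    have hfl : (seq k).2.2 l = (seq (l+1)).2.2 l := (hagree k (l+1) hl l (Nat.lt_succ_self l)).2.2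
    simp only [← hfl, ← hej]
    exact h3 l hl hlj
  · simp only [← hfj, ← hej]; exact h4
  · simp only [← hfj, ← hej, ← hmj]; exact h5

lemma gkey {X Y : Type*} [NormedAddCommGroup X] [NormedSpace ℝ X]
    [NormedAddCommGroup Y] [NormedSpace ℝ Y] (T : X →L[ℝ] Y)
    (E : Submodule ℝ X) (hE : Dense (E : Set X)) (M : Submodule ℝ X)
    (hM : ¬ FiniteDimensional ℝ M) {ε : ℝ} (hε : 0 < ε) :
    ∃ N : Submodule ℝ E, ¬ FiniteDimensional ℝ N ∧
      restrictedNorm (T.comp E.subtypeL) N ≤ restrictedNorm T M + ε := by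
  classical
  set c : ℝ := ‖T.comp M.subtypeL‖ with hcdef
  have hc0 : 0 ≤ c := hcdef ▸ ContinuousLinearMap.opNorm_nonneg _
  set ε₂ : ℝ := ε / (1 + ‖T‖ + c) with hε₂def
  have hden : (0:ℝ) < 1 + ‖T‖ + c := by positivity
  have hε₂ : 0 < ε₂ := div_pos hε hden
  obtain ⟨⟨e, m, f⟩, H⟩ := gchain E M hE hM hε₂
  have hEe : ∀ j, e j ∈ E := fun j => (H (j+1) j (Nat.lt_succ_self j)).1
  have hMm : ∀ j, m j ∈ M := fun j => (H (j+1) j (Nat.lt_succ_self j)).2.1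
  have hf0 : ∀ l j, l ≠ j → f l (e j) = 0 := fun l j hlj =>
    (H (max l j + 1) j (by omega)).2.2.1 l (by omega) hlj
  have hfe : ∀ j, (1/2:ℝ) ≤ f j (e j) := fun j => (H (j+1) j (Nat.lt_succ_self j)).2.2.2.1
  have hδ : ∀ j, (‖f j‖ + 1) * ‖e j - m j‖ ≤ ε₂ * (1/2)^(j+2) := fun j =>
    (H (j+1) j (Nat.lt_succ_self j)).2.2.2.2
  have hTM : ∀ x ∈ M, ‖T x‖ ≤ c * ‖x‖ := by
    intro x hx
    have := (T.comp M.subtypeL).le_opNorm ⟨x, hx⟩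
    simpa using this
  -- the main norm estimate on the span
  have hmain : ∀ x ∈ span ℝ (Set.range e), ‖T x‖ ≤ (c + ε) * ‖x‖ := by
    intro x hx
    rw [Finsupp.mem_span_range_iff_exists_finsupp] at hx
    obtain ⟨cf, hcf⟩ := hx
    have hcoef : ∀ l, f l x = cf l * f l (e l) := by
      intro l
      rw [← hcf, map_finsuppSum]
      rw [Finsupp.sum_eq_single l]
      · rw [map_smul]; simp [mul_comm]
      · intro i _ hil
        rw [map_smul, hf0 l i (Ne.symm hil)]
        simp
      · simp
    have hcl : ∀ l, |cf l| ≤ 2 * ‖f l‖ * ‖x‖ := by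
      intro l
      have h1 : |f l x| ≤ ‖f l‖ * ‖x‖ := (f l).le_opNorm x
      have h2 : |f l x| = |cf l| * |f l (e l)| := by rw [hcoef l, abs_mul]
      have h3 : (1/2 : ℝ) ≤ |f l (e l)| := le_trans (hfe l) (le_abs_self _)
      nlinarith [abs_nonneg (cf l), norm_nonneg (f l), norm_nonneg x]
    set mx : X := cf.sum fun i a => a • m i with hmxdef
    have hmxM : mx ∈ M := by
      rw [hmxdef, Finsupp.sum]
      exact Submodule.sum_mem M (fun i _ => M.smul_mem _ (hMm i))
    have hdiff : x - mx = ∑ i ∈ cf.support, cf i • (e i - m i) := by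
      rw [← hcf, hmxdef]
      simp only [Finsupp.sum]
      rw [← Finset.sum_sub_distrib]
      exact Finset.sum_congr rfl (fun i _ => (smul_sub _ _ _).symm)
    have hxm : ‖x - mx‖ ≤ ε₂ * ‖x‖ := by
      rw [hdiff]
      have hterm : ∀ i ∈ cf.support, ‖cf i • (e i - m i)‖ ≤ ε₂ * ‖x‖ * (1/2)^(i+1) := by
        intro i _
        rw [norm_smul, Real.norm_eq_abs]
        have h1 : ‖f i‖ * ‖e i - m i‖ ≤ ε₂ * (1/2)^(i+2) := by
          have := hδ i
          nlinarith [norm_nonneg (e i - m i)]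
        calc |cf i| * ‖e i - m i‖ ≤ (2 * ‖f i‖ * ‖x‖) * ‖e i - m i‖ :=
              mul_le_mul_of_nonneg_right (hcl i) (norm_nonneg _)
          _ = 2 * ‖x‖ * (‖f i‖ * ‖e i - m i‖) := by ring
          _ ≤ 2 * ‖x‖ * (ε₂ * (1/2)^(i+2)) := by
              apply mul_le_mul_of_nonneg_left h1 (by positivity)
          _ = ε₂ * ‖x‖ * (1/2)^(i+1) := by ring
      calc ‖∑ i ∈ cf.support, cf i • (e i - m i)‖
          ≤ ∑ i ∈ cf.support, ‖cf i • (e i - m i)‖ := norm_sum_le _ _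
        _ ≤ ∑ i ∈ cf.support, ε₂ * ‖x‖ * (1/2)^(i+1) := Finset.sum_le_sum hterm
        _ ≤ ε₂ * ‖x‖ := by
            have hsub : cf.support ⊆ Finset.range (cf.support.sup id + 1) := by
              intro i hi
              rw [Finset.mem_range, Nat.lt_succ_iff]
              exact Finset.le_sup (f := id) hi
            have h1 : ∑ i ∈ cf.support, ε₂ * ‖x‖ * (1/2)^(i+1)
                ≤ ∑ i ∈ Finset.range (cf.support.sup id + 1), ε₂ * ‖x‖ * (1/2)^(i+1) :=
              Finset.sum_le_sum_of_subset_of_nonneg hsub (fun i _ _ => by positivity)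
            have h2 : ∑ i ∈ Finset.range (cf.support.sup id + 1), ε₂ * ‖x‖ * (1/2:ℝ)^(i+1)
                = (ε₂ * ‖x‖ * (1/2)) * ∑ i ∈ Finset.range (cf.support.sup id + 1), (1/2:ℝ)^i := by
              rw [Finset.mul_sum]
              exact Finset.sum_congr rfl (fun i _ => by ring)
            have h3 := sum_geometric_two_le (cf.support.sup id + 1)
            have h4 : (0:ℝ) ≤ ε₂ * ‖x‖ * (1/2) := by positivity
            calc ∑ i ∈ cf.support, ε₂ * ‖x‖ * (1/2)^(i+1)
                ≤ (ε₂ * ‖x‖ * (1/2)) * ∑ i ∈ Finset.range (cf.support.sup id + 1), (1/2:ℝ)^i := by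
                  rw [← h2]; exact h1
              _ ≤ (ε₂ * ‖x‖ * (1/2)) * 2 := mul_le_mul_of_nonneg_left h3 h4
              _ = ε₂ * ‖x‖ := by ring
    have hmx_norm : ‖mx‖ ≤ (1 + ε₂) * ‖x‖ := by
      have h0 : x - (x - mx) = mx := by abel
      have h1 := norm_sub_le x (x - mx)
      rw [h0] at h1
      nlinarith
    have hTx : ‖T x‖ ≤ ‖T‖ * (ε₂ * ‖x‖) + c * ((1 + ε₂) * ‖x‖) := by
      have h1 : T x = T (x - mx) + T mx := by rw [map_sub]; abel
      rw [h1]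
      have h2 : ‖T (x - mx)‖ ≤ ‖T‖ * (ε₂ * ‖x‖) :=
        le_trans (T.le_opNorm _) (mul_le_mul_of_nonneg_left hxm (norm_nonneg _))
      have h3 : ‖T mx‖ ≤ c * ((1 + ε₂) * ‖x‖) :=
        le_trans (hTM mx hmxM) (mul_le_mul_of_nonneg_left hmx_norm hc0)
      exact le_trans (norm_add_le _ _) (add_le_add h2 h3)
    have hkey : ε₂ * (‖T‖ + c) ≤ ε := by
      rw [hε₂def, div_mul_eq_mul_div, div_le_iff₀ hden]
      nlinarith [norm_nonneg T]
    calc ‖T x‖ ≤ ‖T‖ * (ε₂ * ‖x‖) + c * ((1 + ε₂) * ‖x‖) := hTx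
      _ = (c + ε₂ * (‖T‖ + c)) * ‖x‖ := by ring
      _ ≤ (c + ε) * ‖x‖ := by
          apply mul_le_mul_of_nonneg_right _ (norm_nonneg x)
          linarith
  -- linear independence
  have hind : LinearIndependent ℝ e := by
    rw [linearIndependent_iff']
    intro s g hsum i hi
    have h1 := congrArg (f i) hsum
    rw [map_sum, map_zero] at h1
    rw [Finset.sum_eq_single i] at h1
    · rw [map_smul] at h1
      have h2 : (0:ℝ) < f i (e i) := lt_of_lt_of_le (by norm_num) (hfe i)
      have := (smul_eq_zero.mp h1)
      rcases this with h | h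
      · exact h
      · exact absurd h (ne_of_gt h2)
    · intro j _ hji
      rw [map_smul, hf0 i j (Ne.symm hji)]
      simp
    · intro his; exact absurd hi his
  -- assemble the subspace of E
  let v : ℕ → E := fun n => ⟨e n, hEe n⟩
  have hvcomp : (fun n => (E.subtype (v n) : X)) = e := rfl
  have hvind : LinearIndependent ℝ v := by
    apply LinearIndependent.of_comp E.subtype
    rw [show (E.subtype ∘ v : ℕ → X) = e from rfl]
    exact hind
  refine ⟨span ℝ (Set.range v), ?_, ?_⟩
  · intro hfd
    let w : ℕ → span ℝ (Set.range v) := fun n => ⟨v n, subset_span (Set.mem_range_self n)⟩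
    have hwind : LinearIndependent ℝ w := by
      apply LinearIndependent.of_comp (span ℝ (Set.range v)).subtype
      rw [show ((span ℝ (Set.range v)).subtype ∘ w : ℕ → E) = v from rfl]
      exact hvind
    haveI := hfd
    have : Finite ℕ := hwind.finite_of_isNoetherian
    exact not_finite ℕ
  · have hz : ∀ z : span ℝ (Set.range v), ((z : E) : X) ∈ span ℝ (Set.range e) := by
      intro z
      have h1 : ((z : E) : X) ∈ Submodule.map E.subtype (span ℝ (Set.range v)) :=
        Submodule.mem_map_of_mem z.2
      rw [Submodule.map_span] at h1
      have h2 : E.subtype '' Set.range v = Set.range e := by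
        rw [← Set.range_comp]
        rfl
      rwa [h2] at h1
    rw [restrictedNorm, restrictedNorm]
    apply ContinuousLinearMap.opNorm_le_bound _ (by positivity)
    intro z
    have := hmain _ (hz z)
    simpa using this


end Construction

/-- `Γ(T|_E) ≤ Γ(T)` for any dense subspace `E`. -/
theorem gamma_restrict_le {X Y : Type*} [NormedAddCommGroup X] [NormedSpace ℝ X]
    [NormedAddCommGroup Y] [NormedSpace ℝ Y] (hX : ¬ FiniteDimensional ℝ X)
    (T : X →L[ℝ] Y) (E : Submodule ℝ X) (hE : Dense (E : Set X)) :
    opGamma (T.comp E.subtypeL) ≤ opGamma T := by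
  have hTop : ¬ FiniteDimensional ℝ (⊤ : Submodule ℝ X) := by
    intro h
    exact hX (Submodule.topEquiv.finiteDimensional)
  rw [opGamma, opGamma]
  have hne : {r : ℝ | ∃ M : Submodule ℝ X, ¬ FiniteDimensional ℝ M ∧
      r = restrictedNorm T M}.Nonempty := ⟨restrictedNorm T ⊤, ⟨⊤, hTop, rfl⟩⟩
  apply le_csInf hne
  rintro r ⟨M, hM, rfl⟩
  have hbdd : BddBelow {r : ℝ | ∃ N : Submodule ℝ E, ¬ FiniteDimensional ℝ N ∧
      r = restrictedNorm (T.comp E.subtypeL) N} := by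
    refine ⟨0, ?_⟩
    rintro r ⟨N, _, rfl⟩
    exact ContinuousLinearMap.opNorm_nonneg _
  apply le_of_forall_pos_le_add
  intro ε hε
  obtain ⟨N, hN, hle⟩ := gkey T E hE M hM hε
  exact le_trans (csInf_le hbdd ⟨N, hN, rfl⟩) hle
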